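/- Let n ≥ 2 be an integer and v = ⌊√n⌋. (i) If (a,b) and (x,y) are pairs of positive integers with a, b, x, y ≤ v, gcd(a,b) = 1, gcd(x,y) = 1, and n divides ax + by, then ax + by = n. (ii) If (a,b) is a pair of positive integers with a, b ≤ v, gcd(a,b) = 1, and n divides a² + ab + b², then a² + ab + b² = n. (In particular, every divisibility condition n ∣ ax+by or n ∣ a²+ab+b² among the denominators of Farey fractions of order ⌊√n⌋ lifts to an equality, so every non-translation side-pairing element of the convex hull of the Farey sequence of order ⌊√n⌋ for Γ₀(n) has lower-left entry exactly n.) -/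
import Mathlib


private lemma mulmax (a x v : ℕ) (hv : 0 < v) (ha : a ≤ v) (hx : x ≤ v)
    (h : a * x = v * v) : a = v ∧ x = v := by
  have h1 : a * x ≤ a * v := Nat.mul_le_mul_left a hx
  have h2 : v ≤ a := Nat.le_of_mul_le_mul_right (h ▸ h1) hv
  have ha' : a = v := le_antisymm ha h2
  subst ha'
  exact ⟨rfl, Nat.eq_of_mul_eq_mul_left hv h⟩


/-- **Lemma.** Let `n ≥ 2` and `v = ⌊√n⌋`.
(i) If `a, b, x, y` are positive integers `≤ v` with `gcd(a,b) = gcd(x,y) = 1` and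
`n ∣ ax + by`, then `ax + by = n`.
(ii) If `a, b` are positive integers `≤ v` with `gcd(a,b) = 1` and `n ∣ a² + ab + b²`,
then `a² + ab + b² = n`.
(In other words, the divisibility conditions among denominators of the Farey sequence of
order `⌊√n⌋` lift to equalities: every non-translation side-pairing element of the convex hull
of the Farey sequence of order `⌊√n⌋` for `Γ₀(n)` has lower-left entry exactly `n`.) -/
theorem stmt4 (n : ℕ) (hn : 2 ≤ n) :
    (∀ a b x y : ℕ, 0 < a → 0 < b → 0 < x → 0 < y →
      a ≤ Nat.sqrt n → b ≤ Nat.sqrt n → x ≤ Nat.sqrt n → y ≤ Nat.sqrt n →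
      Nat.Coprime a b → Nat.Coprime x y → n ∣ a * x + b * y → a * x + b * y = n) ∧
    (∀ a b : ℕ, 0 < a → 0 < b → a ≤ Nat.sqrt n → b ≤ Nat.sqrt n →
      Nat.Coprime a b → n ∣ a ^ 2 + a * b + b ^ 2 → a ^ 2 + a * b + b ^ 2 = n) := by
  set v := Nat.sqrt n with hvdef
  have hvv : v * v ≤ n := by simpa [sq] using Nat.sqrt_le' n
  have hnpos : 0 < n := by omega
  constructor
  · intro a b x y ha hb hx hy hav hbv hxv hyv hab hxy hdvd
    have h1 : a * x ≤ v * v := Nat.mul_le_mul hav hxv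
    have h2 : b * y ≤ v * v := Nat.mul_le_mul hbv hyv
    obtain ⟨k, hk⟩ := hdvd
    have hpos : 0 < a * x + b * y := by positivity
    have hk2 : k ≤ 2 := by nlinarith
    have hk1 : 1 ≤ k := by nlinarith
    interval_cases k
    · omega
    · exfalso
      -- a*x + b*y = 2n, with each ≤ v*v ≤ n, so a*x = b*y = n = v*v
      have hax : a * x = n := by omega
      have hn' : n = v * v := by omega
      have hvpos : 0 < v := lt_of_lt_of_le ha hav
      obtain ⟨hA, hX⟩ := mulmax a x v hvpos hav hxv (by omega)
      obtain ⟨hB, hY⟩ := mulmax b y v hvpos hbv hyv (by omega)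
      rw [hX, hY] at hxy
      have hab := hxy
      have hv1 : v = 1 := by simpa [Nat.Coprime] using hab
      rw [hv1] at hn'
      omega
  · intro a b ha hb hav hbv hab hdvd
    have h1 : a * a ≤ v * v := Nat.mul_le_mul hav hav
    have h2 : b * b ≤ v * v := Nat.mul_le_mul hbv hbv
    have h3 : a * b ≤ v * v := Nat.mul_le_mul hav hbv
    obtain ⟨k, hk⟩ := hdvd
    have hsq : a ^ 2 = a * a := sq a
    have hsqb : b ^ 2 = b * b := sq b
    have hpos : 0 < a ^ 2 + a * b + b ^ 2 := by positivity
    have hk3 : k ≤ 3 := by nlinarith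
    have hk1 : 1 ≤ k := by nlinarith
    interval_cases k
    · omega
    · exfalso
      -- parity: a^2 + ab + b^2 is odd since gcd(a,b)=1
      have hmod : (a ^ 2 + a * b + b ^ 2) % 2 =
          (a % 2 * (a % 2) + a % 2 * (b % 2) + b % 2 * (b % 2)) % 2 := by
        conv_lhs => rw [hsq, hsqb]
        rw [Nat.add_mod, Nat.add_mod (a*a), Nat.mul_mod a a, Nat.mul_mod a b,
          Nat.mul_mod b b]
        simp [Nat.add_mod]
      have h2a := Nat.mod_two_eq_zero_or_one a
      have h2b := Nat.mod_two_eq_zero_or_one b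
      have hne : ¬ (a % 2 = 0 ∧ b % 2 = 0) := by
        rintro ⟨ea, eb⟩
        have : (2 : ℕ) ∣ Nat.gcd a b := Nat.dvd_gcd (by omega) (by omega)
        rw [hab] at this
        omega
      rcases h2a with ea | ea <;> rcases h2b with eb | eb <;>
        simp [ea, eb] at hmod hne ⊢ <;> omega
    · exfalso
      -- each term = n, so a² = ab → a = b → a = 1
      have haa : a * a = n := by omega
      have habn : a * b = n := by omega
      have hABeq : a = b := Nat.eq_of_mul_eq_mul_left ha (haa.trans habn.symm)
      subst hABeq
      have ha1 : a = 1 := by simpa [Nat.Coprime] using hab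
      subst ha1
      norm_num at haa
      omega
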